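/- Fix a natural number n ≥ 1 and let T_n(u,v) = Σ_{k=0}^{n} C(n,k)²·u^k·v^{n-k}, T_{n1} = ∂T_n/∂u, T_{n2} = ∂T_n/∂v, and let G_n be a function with ∂G_n/∂u = v·∂T_n/∂v and ∂G_n/∂v = u·∂T_n/∂u. Define the functions of two real variables (p,q): A(p,q) = T_{n1}(e^p, e^q)·e^p·(e^p + e^q) + 2·T_{n2}(e^p, e^q)·e^q·e^p − G_n(e^p, e^q) and B(p,q) = T_{n2}(e^p, e^q)·e^q·(e^p + e^q) + 2·T_{n1}(e^p, e^q)·e^q·e^p − G_n(e^p, e^q). Then the exactness condition ∂A/∂q = ∂B/∂p holds for all real p, q. -/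

import Mathlib

open Real Finset

/-- Conserved density of the dispersionless Toda hierarchy:
`T n u v = ∑_{k=0}^{n} C(n,k)^2 * u^k * v^(n-k)`. -/
noncomputable def Ttoda (n : ℕ) (u v : ℝ) : ℝ :=
  ∑ k ∈ Finset.range (n + 1), (n.choose k : ℝ) ^ 2 * u ^ k * v ^ (n - k)

noncomputable def T1 (n : ℕ) (u v : ℝ) : ℝ :=
  ∑ k ∈ Finset.range (n + 1), (n.choose k : ℝ) ^ 2 * ((k : ℝ) * u ^ (k - 1)) * v ^ (n - k)

noncomputable def T2 (n : ℕ) (u v : ℝ) : ℝ :=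
  ∑ k ∈ Finset.range (n + 1), (n.choose k : ℝ) ^ 2 * u ^ k * (((n - k : ℕ) : ℝ) * v ^ (n - k - 1))

noncomputable def T11 (n : ℕ) (u v : ℝ) : ℝ :=
  ∑ k ∈ Finset.range (n + 1),
    (n.choose k : ℝ) ^ 2 * ((k : ℝ) * (((k - 1 : ℕ) : ℝ) * u ^ (k - 1 - 1))) * v ^ (n - k)

noncomputable def T12 (n : ℕ) (u v : ℝ) : ℝ :=
  ∑ k ∈ Finset.range (n + 1),
    (n.choose k : ℝ) ^ 2 * ((k : ℝ) * u ^ (k - 1)) * (((n - k : ℕ) : ℝ) * v ^ (n - k - 1))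

noncomputable def T22 (n : ℕ) (u v : ℝ) : ℝ :=
  ∑ k ∈ Finset.range (n + 1),
    (n.choose k : ℝ) ^ 2 * u ^ k *
      (((n - k : ℕ) : ℝ) * (((n - k - 1 : ℕ) : ℝ) * v ^ (n - k - 1 - 1)))

lemma hasDerivAt_T_u (n : ℕ) (u v : ℝ) :
    HasDerivAt (fun w => Ttoda n w v) (T1 n u v) u := by
  unfold Ttoda T1
  exact HasDerivAt.fun_sum fun k _ => ((hasDerivAt_pow k u).const_mul _).mul_const _

lemma hasDerivAt_T_v (n : ℕ) (u v : ℝ) :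
    HasDerivAt (fun w => Ttoda n u w) (T2 n u v) v := by
  unfold Ttoda T2
  exact HasDerivAt.fun_sum fun k _ => (hasDerivAt_pow (n - k) v).const_mul _

lemma hasDerivAt_T1_u (n : ℕ) (u v : ℝ) :
    HasDerivAt (fun w => T1 n w v) (T11 n u v) u := by
  unfold T1 T11
  exact HasDerivAt.fun_sum fun k _ =>
    (((hasDerivAt_pow (k - 1) u).const_mul (k : ℝ)).const_mul _).mul_const _

lemma hasDerivAt_T1_v (n : ℕ) (u v : ℝ) :
    HasDerivAt (fun w => T1 n u w) (T12 n u v) v := by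
  unfold T1 T12
  exact HasDerivAt.fun_sum fun k _ => (hasDerivAt_pow (n - k) v).const_mul _

lemma hasDerivAt_T2_u (n : ℕ) (u v : ℝ) :
    HasDerivAt (fun w => T2 n w v) (T12 n u v) u := by
  unfold T2 T12
  exact HasDerivAt.fun_sum fun k _ => ((hasDerivAt_pow k u).const_mul _).mul_const _

lemma hasDerivAt_T2_v (n : ℕ) (u v : ℝ) :
    HasDerivAt (fun w => T2 n u w) (T22 n u v) v := by
  unfold T2 T22
  exact HasDerivAt.fun_sum fun k _ =>
    (((hasDerivAt_pow (n - k - 1) v).const_mul ((n - k : ℕ) : ℝ)).const_mul _)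

lemma helper (m : ℕ) (v : ℝ) :
    v * ((m : ℝ) * (((m - 1 : ℕ) : ℝ) * v ^ (m - 1 - 1))) + (m : ℝ) * v ^ (m - 1)
      = ((m : ℝ)) ^ 2 * v ^ (m - 1) := by
  match m with
  | 0 => simp
  | 1 => simp
  | (m + 2) =>
    have h1 : m + 2 - 1 = m + 1 := by omega
    have h2 : m + 1 - 1 = m := by omega
    rw [h1, h2]
    push_cast
    ring

lemma reindex (n : ℕ) (u v : ℝ) :
    ∑ k ∈ Finset.range (n + 1),
        (n.choose k : ℝ) ^ 2 * u ^ k * (((n - k : ℕ) : ℝ) ^ 2 * v ^ (n - k - 1))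
      = ∑ k ∈ Finset.range (n + 1),
        (n.choose k : ℝ) ^ 2 * ((k : ℝ) ^ 2 * u ^ (k - 1)) * v ^ (n - k) := by
  rw [Finset.sum_range_succ, Finset.sum_range_succ']
  norm_num
  apply Finset.sum_congr rfl
  intro k hk
  rw [Finset.mem_range] at hk
  have h0 : ((n.choose (k + 1) * (k + 1) : ℕ) : ℝ) = ((n.choose k * (n - k) : ℕ) : ℝ) := by
    exact_mod_cast congrArg (Nat.cast (R := ℝ)) (Nat.choose_succ_right_eq n k)
  rw [Nat.cast_mul, Nat.cast_mul, Nat.cast_add, Nat.cast_one] at h0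
  have hsq : ((n.choose (k + 1) : ℝ) * ((k : ℝ) + 1)) ^ 2
      = ((n.choose k : ℝ) * ((n - k : ℕ) : ℝ)) ^ 2 := by rw [h0]
  have he : n - (k + 1) = n - k - 1 := by omega
  rw [he]
  linear_combination (-(u ^ k * v ^ (n - k - 1))) * hsq

lemma key (n : ℕ) (u v : ℝ) :
    v * T22 n u v + T2 n u v = u * T11 n u v + T1 n u v := by
  unfold T22 T2 T11 T1
  rw [Finset.mul_sum, Finset.mul_sum, ← Finset.sum_add_distrib, ← Finset.sum_add_distrib]
  have hL : ∀ k ∈ Finset.range (n + 1),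
      v * ((n.choose k : ℝ) ^ 2 * u ^ k *
          (((n - k : ℕ) : ℝ) * (((n - k - 1 : ℕ) : ℝ) * v ^ (n - k - 1 - 1))))
        + (n.choose k : ℝ) ^ 2 * u ^ k * (((n - k : ℕ) : ℝ) * v ^ (n - k - 1))
      = (n.choose k : ℝ) ^ 2 * u ^ k * (((n - k : ℕ) : ℝ) ^ 2 * v ^ (n - k - 1)) := by
    intro k _
    linear_combination ((n.choose k : ℝ) ^ 2 * u ^ k) * helper (n - k) v
  have hR : ∀ k ∈ Finset.range (n + 1),
      u * ((n.choose k : ℝ) ^ 2 * ((k : ℝ) * (((k - 1 : ℕ) : ℝ) * u ^ (k - 1 - 1))) * v ^ (n - k))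
        + (n.choose k : ℝ) ^ 2 * ((k : ℝ) * u ^ (k - 1)) * v ^ (n - k)
      = (n.choose k : ℝ) ^ 2 * ((k : ℝ) ^ 2 * u ^ (k - 1)) * v ^ (n - k) := by
    intro k _
    linear_combination ((n.choose k : ℝ) ^ 2 * v ^ (n - k)) * helper k u
  rw [Finset.sum_congr rfl hL, Finset.sum_congr rfl hR]
  exact reindex n u v

theorem toda_exactness (n : ℕ) (hn : 1 ≤ n) (G : ℝ → ℝ → ℝ)
    (hGu : ∀ u v : ℝ, HasDerivAt (fun u' => G u' v) (v * deriv (fun w => Ttoda n u w) v) u)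
    (hGv : ∀ u v : ℝ, HasDerivAt (fun v' => G u v') (u * deriv (fun w => Ttoda n w v) u) v)
    (p q : ℝ) :
    deriv (fun q' =>
        deriv (fun w => Ttoda n w (Real.exp q')) (Real.exp p) * Real.exp p *
            (Real.exp p + Real.exp q')
          + 2 * deriv (fun w => Ttoda n (Real.exp p) w) (Real.exp q') * Real.exp q' * Real.exp p
          - G (Real.exp p) (Real.exp q')) q =
      deriv (fun p' =>
        deriv (fun w => Ttoda n (Real.exp p') w) (Real.exp q) * Real.exp q *
            (Real.exp p' + Real.exp q)
          + 2 * deriv (fun w => Ttoda n w (Real.exp q)) (Real.exp p') * Real.exp p' * Real.exp q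
          - G (Real.exp p') (Real.exp q)) p := by
  have du : ∀ u v : ℝ, deriv (fun w => Ttoda n w v) u = T1 n u v :=
    fun u v => (hasDerivAt_T_u n u v).deriv
  have dv : ∀ u v : ℝ, deriv (fun w => Ttoda n u w) v = T2 n u v :=
    fun u v => (hasDerivAt_T_v n u v).deriv
  simp only [du, dv]
  set u := Real.exp p with hup
  set v := Real.exp q with hvq
  -- q-side pieces
  have h1v : HasDerivAt (fun q' => T1 n u (Real.exp q')) (T12 n u v * Real.exp q) q :=
    by have := (hasDerivAt_T1_v n u v).comp q (Real.hasDerivAt_exp q); exact this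
  have h2v : HasDerivAt (fun q' => T2 n u (Real.exp q')) (T22 n u v * Real.exp q) q :=
    by have := (hasDerivAt_T2_v n u v).comp q (Real.hasDerivAt_exp q); exact this
  have hGq : HasDerivAt (fun q' => G u (Real.exp q')) (u * T1 n u v * Real.exp q) q := by
    have := (hGv u v).comp q (Real.hasDerivAt_exp q)
    rwa [du] at this
  have hA : HasDerivAt
      (fun q' => T1 n u (Real.exp q') * u * (u + Real.exp q')
        + 2 * T2 n u (Real.exp q') * Real.exp q' * u - G u (Real.exp q'))
      ((T12 n u v * Real.exp q * u) * (u + v)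
        + (T1 n u v * u) * Real.exp q
        + ((2 * (T22 n u v * Real.exp q) * v + 2 * T2 n u v * Real.exp q) * u)
        - u * T1 n u v * Real.exp q) q := by
    exact (((h1v.mul_const u).mul ((Real.hasDerivAt_exp q).const_add u)).add
      (((h2v.const_mul 2).mul (Real.hasDerivAt_exp q)).mul_const u)).sub hGq
  -- p-side pieces
  have h2u : HasDerivAt (fun p' => T2 n (Real.exp p') v) (T12 n u v * Real.exp p) p :=
    by have := (hasDerivAt_T2_u n u v).comp p (Real.hasDerivAt_exp p); exact this
  have h1u : HasDerivAt (fun p' => T1 n (Real.exp p') v) (T11 n u v * Real.exp p) p :=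
    by have := (hasDerivAt_T1_u n u v).comp p (Real.hasDerivAt_exp p); exact this
  have hGp : HasDerivAt (fun p' => G (Real.exp p') v) (v * T2 n u v * Real.exp p) p := by
    have := (hGu u v).comp p (Real.hasDerivAt_exp p)
    rwa [dv] at this
  have hB : HasDerivAt
      (fun p' => T2 n (Real.exp p') v * v * (Real.exp p' + v)
        + 2 * T1 n (Real.exp p') v * Real.exp p' * v - G (Real.exp p') v)
      ((T12 n u v * Real.exp p * v) * (u + v)
        + (T2 n u v * v) * Real.exp p
        + ((2 * (T11 n u v * Real.exp p) * u + 2 * T1 n u v * Real.exp p) * v)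
        - v * T2 n u v * Real.exp p) p := by
    exact (((h2u.mul_const v).mul ((Real.hasDerivAt_exp p).add_const v)).add
      (((h1u.const_mul 2).mul (Real.hasDerivAt_exp p)).mul_const v)).sub hGp
  rw [hA.deriv, hB.deriv]
  have hk := key n u v
  rw [← hup, ← hvq]
  linear_combination (2 * u * v) * hk
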